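/- Let f₁, f₂, …, f_s be integer polynomials, not all zero. Then there exist an integer polynomial f, a natural number r, rational numbers α, α₁, …, α_r, integers m₁, …, m_r with m_i > 1 for all i, and integers n₁, …, n_r with 0 < n_i < m_i for all i, such that for every integer x, gcd(f₁(x), f₂(x), …, f_s(x)) = (α + Σ_{i=1}^{r} α_i · gcd(x − n_i, m_i)) · |f(x)|. -/

import Mathlib

open Finset

/-- Functions expressible as `α + ∑ a_p * gcd (x - p.2) p.1` with `1 < p.1`, `0 < p.2 < p.1`. -/
def PorcRep (g : ℤ → ℚ) : Prop :=
  ∃ (T : Finset (ℕ × ℕ)) (a : ℕ × ℕ → ℚ) (α : ℚ),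
    (∀ p ∈ T, 1 < p.1 ∧ 0 < p.2 ∧ p.2 < p.1) ∧
    ∀ x : ℤ, g x = α + ∑ p ∈ T, a p * (Int.gcd (x - (p.2 : ℤ)) (p.1 : ℤ) : ℚ)

lemma PorcRep.congr {g g' : ℤ → ℚ} (h : PorcRep g) (he : ∀ x, g x = g' x) : PorcRep g' := by
  obtain ⟨T, a, α, hT, hg⟩ := h
  exact ⟨T, a, α, hT, fun x => (he x) ▸ hg x⟩

lemma PorcRep.const (q : ℚ) : PorcRep (fun _ => q) := ⟨∅, 0, q, by simp, by simp⟩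

lemma PorcRep.add {g₁ g₂ : ℤ → ℚ} (h₁ : PorcRep g₁) (h₂ : PorcRep g₂) : PorcRep (fun x => g₁ x + g₂ x) := by
  obtain ⟨T₁, a₁, α₁, hT₁, hg₁⟩ := h₁
  obtain ⟨T₂, a₂, α₂, hT₂, hg₂⟩ := h₂
  refine ⟨T₁ ∪ T₂, (fun p => (if p ∈ T₁ then a₁ p else 0) + (if p ∈ T₂ then a₂ p else 0)),
    α₁ + α₂, ?_, ?_⟩
  · intro p hp
    rcases Finset.mem_union.1 hp with h | h
    exacts [hT₁ p h, hT₂ p h]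
  · intro x
    simp only []
    rw [hg₁ x, hg₂ x]
    have e1 : ∀ (T' : Finset (ℕ × ℕ)) (a : ℕ × ℕ → ℚ), T' ⊆ T₁ ∪ T₂ →
        ∑ p ∈ T₁ ∪ T₂, (if p ∈ T' then a p else 0) *
          (Int.gcd (x - (p.2 : ℤ)) (p.1 : ℤ) : ℚ)
        = ∑ p ∈ T', a p * (Int.gcd (x - (p.2 : ℤ)) (p.1 : ℤ) : ℚ) := by
      intro T' a hsub
      rw [← Finset.sum_subset hsub (by intro p _ hp; simp [hp])]
      exact Finset.sum_congr rfl (by intro p hp; simp [hp])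
    have := e1 T₁ a₁ Finset.subset_union_left
    have := e1 T₂ a₂ Finset.subset_union_right
    simp only [add_mul]
    rw [Finset.sum_add_distrib, e1 T₁ a₁ Finset.subset_union_left,
      e1 T₂ a₂ Finset.subset_union_right]
    ring

lemma PorcRep.smul (c : ℚ) {g : ℤ → ℚ} (h : PorcRep g) : PorcRep (fun x => c * g x) := by
  obtain ⟨T, a, α, hT, hg⟩ := h
  refine ⟨T, fun p => c * a p, c * α, hT, fun x => ?_⟩
  simp only []
  rw [hg x, mul_add, Finset.mul_sum]
  exact congrArg _ (Finset.sum_congr rfl fun p _ => by ring)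

lemma PorcRep.sum {ι : Type*} (T : Finset ι) (g : ι → ℤ → ℚ) (h : ∀ i ∈ T, PorcRep (g i)) :
    PorcRep (fun x => ∑ i ∈ T, g i x) := by
  classical
  induction T using Finset.induction_on with
  | empty => exact (PorcRep.const 0).congr (by simp)
  | insert i T' hni ih =>
    exact ((h i (Finset.mem_insert_self i T')).add
      (ih fun j hj => h j (Finset.mem_insert_of_mem hj))).congr
      (fun x => by rw [Finset.sum_insert hni])

lemma int_gcd_congr {a b d : ℤ} (h : d ∣ a - b) : Int.gcd a d = Int.gcd b d := by
  have key : ∀ a b : ℤ, d ∣ a - b → (Int.gcd a d : ℤ) ∣ Int.gcd b d := by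
    intro a b h
    refine Int.dvd_coe_gcd ?_ (Int.gcd_dvd_right _ _)
    have hb : b = a - (a - b) := by ring
    rw [hb]
    exact dvd_sub (Int.gcd_dvd_left _ _) ((Int.gcd_dvd_right _ _).trans h)
  exact Nat.dvd_antisymm (Int.natCast_dvd_natCast.1 (key a b h))
    (Int.natCast_dvd_natCast.1 (key b a (dvd_sub_comm.mp h)))




lemma PorcRep.single (d j : ℕ) (h1 : 1 < d) (h2 : 0 < j) (h3 : j < d) :
    PorcRep (fun x => (Int.gcd (x - (j : ℤ)) (d : ℤ) : ℚ)) := by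
  refine ⟨{(d, j)}, fun _ => 1, 0, ?_, fun x => by simp⟩
  intro p hp
  simp only [Finset.mem_singleton] at hp
  subst hp
  exact ⟨h1, h2, h3⟩

lemma PorcRep.fin_form {t : ℤ → ℚ} (h : PorcRep t) :
    ∃ (r : ℕ) (α : ℚ) (a : Fin r → ℚ) (m : Fin r → ℤ) (n : Fin r → ℤ),
      (∀ i, 1 < m i) ∧ (∀ i, 0 < n i ∧ n i < m i) ∧
      ∀ x : ℤ, t x = α + ∑ i, a i * (Int.gcd (x - n i) (m i) : ℚ) := by
  obtain ⟨T, a, α, hT, hg⟩ := h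
  refine ⟨T.card, α, fun i => a (T.equivFin.symm i), fun i => ((T.equivFin.symm i : ℕ × ℕ).1 : ℤ),
    fun i => ((T.equivFin.symm i : ℕ × ℕ).2 : ℤ), ?_, ?_, ?_⟩
  · intro i
    have := hT _ (T.equivFin.symm i).2
    show (1:ℤ) < ((T.equivFin.symm i : ℕ × ℕ).1 : ℤ)
    exact_mod_cast this.1
  · intro i
    have := hT _ (T.equivFin.symm i).2
    constructor
    · show (0:ℤ) < ((T.equivFin.symm i : ℕ × ℕ).2 : ℤ)
      exact_mod_cast this.2.1
    · show ((T.equivFin.symm i : ℕ × ℕ).2 : ℤ) < ((T.equivFin.symm i : ℕ × ℕ).1 : ℤ)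
      exact_mod_cast this.2.2
  · intro x
    rw [hg x]
    congr 1
    rw [Equiv.sum_comp T.equivFin.symm
      (fun p : T => a p * (Int.gcd (x - ((p : ℕ × ℕ).2 : ℤ)) (((p : ℕ × ℕ).1 : ℕ) : ℤ) : ℚ))]
    exact (Finset.sum_coe_sort T _).symm




lemma dvd_sub_emod' (a : ℤ) (d : ℤ) : d ∣ a - a % d := by
  have := Int.mul_ediv_add_emod a d
  exact ⟨a / d, by linarith⟩

lemma gcd_residue_sum (d : ℕ) (x : ℤ) :
    ∑ j ∈ Finset.range d, (Int.gcd (x - (j : ℤ)) (d : ℤ) : ℚ)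
      = ∑ j ∈ Finset.range d, (Int.gcd (j : ℤ) (d : ℤ) : ℚ) := by
  rcases Nat.eq_zero_or_pos d with rfl | hd
  · simp
  have hd' : (0:ℤ) < (d:ℤ) := by exact_mod_cast hd
  refine Finset.sum_nbij' (i := fun a => ((x - (a:ℤ)) % d).toNat)
    (j := fun b => ((x - (b:ℤ)) % d).toNat) ?_ ?_ ?_ ?_ ?_
  · intro a _
    simp only [Finset.mem_range]
    have h1 := Int.emod_nonneg (x - (a:ℤ)) (by positivity)
    have h2 := Int.emod_lt_of_pos (x - (a:ℤ)) hd'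
    omega
  · intro b _
    simp only [Finset.mem_range]
    have h1 := Int.emod_nonneg (x - (b:ℤ)) (by positivity)
    have h2 := Int.emod_lt_of_pos (x - (b:ℤ)) hd'
    omega
  · intro a ha
    simp only [Finset.mem_range] at ha
    have h1 := Int.emod_nonneg (x - (a:ℤ)) (ne_of_gt hd')
    have key : (x - (((x - (a:ℤ)) % d).toNat : ℤ)) % d = (a:ℤ) % d := by
      rw [Int.toNat_of_nonneg h1, Int.sub_emod, Int.emod_emod_of_dvd _ dvd_rfl,
        ← Int.sub_emod, sub_sub_cancel]
    show ((x - (((x - (a:ℤ)) % d).toNat : ℤ)) % d).toNat = a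
    rw [key, Int.emod_eq_of_lt (by positivity) (by exact_mod_cast ha)]
    simp
  · intro b hb
    simp only [Finset.mem_range] at hb
    have h1 := Int.emod_nonneg (x - (b:ℤ)) (ne_of_gt hd')
    have key : (x - (((x - (b:ℤ)) % d).toNat : ℤ)) % d = (b:ℤ) % d := by
      rw [Int.toNat_of_nonneg h1, Int.sub_emod, Int.emod_emod_of_dvd _ dvd_rfl,
        ← Int.sub_emod, sub_sub_cancel]
    show ((x - (((x - (b:ℤ)) % d).toNat : ℤ)) % d).toNat = b
    rw [key, Int.emod_eq_of_lt (by positivity) (by exact_mod_cast hb)]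
    simp
  · intro a _
    congr 1
    have h1 := Int.emod_nonneg (x - (a:ℤ)) (ne_of_gt hd')
    refine int_gcd_congr ?_
    rw [Int.toNat_of_nonneg h1]
    exact dvd_sub_emod' _ _

lemma porcRep_gcd (d : ℕ) (hd : 0 < d) (n : ℤ) :
    PorcRep (fun x => (Int.gcd (x - n) (d : ℤ) : ℚ)) := by
  have hd' : (0:ℤ) < (d:ℤ) := by exact_mod_cast hd
  set n' : ℕ := (n % d).toNat with hn'
  have hnn : (0:ℤ) ≤ n % d := Int.emod_nonneg n (ne_of_gt hd')
  have hlt : (n':ℤ) < d := by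
    rw [hn', Int.toNat_of_nonneg hnn]; exact Int.emod_lt_of_pos n hd'
  have hcongr : ∀ x : ℤ, Int.gcd (x - (n':ℤ)) d = Int.gcd (x - n) d := by
    intro x
    refine int_gcd_congr ?_
    have : (x - (n':ℤ)) - (x - n) = n - n % d := by
      rw [hn', Int.toNat_of_nonneg hnn]; ring
    rw [this]
    exact dvd_sub_emod' n d
  rcases eq_or_lt_of_le (show 1 ≤ d from hd) with h1 | h1
  · -- d = 1
    refine (PorcRep.const 1).congr (fun x => ?_)
    have : (d:ℤ) = 1 := by omega
    simp [this]
  · rcases Nat.eq_zero_or_pos n' with h0 | h0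
    · -- n ≡ 0 mod d : use residue sum
      have hrep : PorcRep (fun x => ((∑ j ∈ Finset.range d, (Int.gcd ((j:ℤ)) (d:ℤ) : ℚ)) +
          (-1) * ∑ j ∈ Finset.range (d-1), (Int.gcd (x - ((j+1 : ℕ):ℤ)) (d:ℤ) : ℚ))) := by
        refine (PorcRep.const _).add (PorcRep.smul (-1) ?_)
        refine PorcRep.sum _ _ (fun j hj => ?_)
        simp only [Finset.mem_range] at hj
        exact PorcRep.single d (j+1) h1 (Nat.succ_pos j) (by omega)
      refine hrep.congr (fun x => ?_)
      have hsum := gcd_residue_sum d x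
      have hsplit : ∑ j ∈ Finset.range d, (Int.gcd (x - (j:ℤ)) (d:ℤ) : ℚ)
          = (Int.gcd x (d:ℤ) : ℚ)
            + ∑ j ∈ Finset.range (d-1), (Int.gcd (x - ((j+1 : ℕ):ℤ)) (d:ℤ) : ℚ) := by
        have hd2 : d = (d - 1) + 1 := by omega
        rw [hd2, Finset.sum_range_succ']
        simp [add_comm]
      have hx : Int.gcd x (d:ℤ) = Int.gcd (x - n) d := by
        have h2 := hcongr x
        rw [h0] at h2
        simpa using h2
      rw [← hx]
      rw [hsplit] at hsum
      linarith
    · refine (PorcRep.single d n' h1 h0 (by exact_mod_cast hlt)).congr (fun x => ?_)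
      exact_mod_cast congrArg (fun z : ℕ => (z:ℚ)) (hcongr x)




open ArithmeticFunction
open scoped ArithmeticFunction.zeta ArithmeticFunction.Moebius

lemma gcd_eq_sum_totient (y : ℤ) (m : ℕ) (hm : 0 < m) :
    (Int.gcd y (m:ℤ) : ℚ) = ∑ e ∈ m.divisors, (if (e:ℤ) ∣ y then (Nat.totient e : ℚ) else 0) := by
  rw [Finset.sum_ite, Finset.sum_const_zero, add_zero]
  have hfil : m.divisors.filter (fun e : ℕ => (e:ℤ) ∣ y) = (Nat.gcd y.natAbs m).divisors := by
    ext e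
    simp only [Finset.mem_filter, Nat.mem_divisors]
    constructor
    · rintro ⟨⟨h1, h2⟩, h3⟩
      refine ⟨Nat.dvd_gcd ?_ h1, ?_⟩
      · rwa [← Int.natAbs_dvd_natAbs, Int.natAbs_natCast] at h3
      · exact Nat.ne_of_gt (Nat.gcd_pos_of_pos_right _ hm)
    · rintro ⟨h1, _⟩
      refine ⟨⟨h1.trans (Nat.gcd_dvd_right _ _), hm.ne'⟩, ?_⟩
      rw [← Int.natAbs_dvd_natAbs, Int.natAbs_natCast]
      exact h1.trans (Nat.gcd_dvd_left _ _)
  rw [hfil]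
  have : Int.gcd y (m:ℤ) = Nat.gcd y.natAbs m := by
    unfold Int.gcd; rw [Int.natAbs_natCast]
  rw [this]
  exact_mod_cast congrArg (fun z : ℕ => (z:ℚ)) (Nat.sum_totient _).symm

noncomputable def chiFun (y : ℤ) : ArithmeticFunction ℚ :=
  ⟨fun e => if (e:ℤ) ∣ y ∧ e ≠ 0 then (Nat.totient e : ℚ) else 0, by simp⟩

lemma zeta_mul_chi (y : ℤ) (m : ℕ) (hm : 0 < m) :
    ((ζ : ArithmeticFunction ℚ) * chiFun y) m = (Int.gcd y (m:ℤ) : ℚ) := by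
  rw [coe_zeta_mul_apply, gcd_eq_sum_totient y m hm]
  refine Finset.sum_congr rfl (fun e he => ?_)
  have : e ≠ 0 := Nat.pos_of_mem_divisors he |>.ne'
  simp [chiFun, this]

lemma indicator_eq (M : ℕ) (hM : 0 < M) (y : ℤ) :
    (if (M:ℤ) ∣ y then (1:ℚ) else 0) =
      (Nat.totient M : ℚ)⁻¹ *
        ∑ d ∈ M.divisors, ((moebius (M/d) : ℤ) : ℚ) * (Int.gcd y (d:ℤ) : ℚ) := by
  have key : ((↑μ : ArithmeticFunction ℚ) * ((ζ : ArithmeticFunction ℚ) * chiFun y)) M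
      = chiFun y M := by
    rw [← mul_assoc, coe_moebius_mul_coe_zeta, one_mul]
  have expand : ((↑μ : ArithmeticFunction ℚ) * ((ζ : ArithmeticFunction ℚ) * chiFun y)) M
      = ∑ d ∈ M.divisors, ((moebius (M/d) : ℤ) : ℚ) * (Int.gcd y (d:ℤ) : ℚ) := by
    rw [mul_apply]
    rw [Nat.sum_divisorsAntidiagonal' (f := fun a b =>
      ((↑μ : ArithmeticFunction ℚ) a) * ((ζ : ArithmeticFunction ℚ) * chiFun y) b)]
    refine Finset.sum_congr rfl (fun d hd => ?_)
    rw [zeta_mul_chi y d (Nat.pos_of_mem_divisors hd)]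
    simp [intCoe_apply]
  have hchi : chiFun y M = if (M:ℤ) ∣ y then (Nat.totient M : ℚ) else 0 := by
    simp only [chiFun, ArithmeticFunction.coe_mk, hM.ne', ne_eq, not_false_iff, and_true]
  have htot : (Nat.totient M : ℚ) ≠ 0 := by
    exact_mod_cast (Nat.totient_pos.mpr hM).ne'
  rw [← expand, key, hchi]
  by_cases h : (M:ℤ) ∣ y <;> simp [h, htot]

lemma porcRep_of_periodic (M : ℕ) (hM : 0 < M) (t : ℤ → ℚ)
    (hp : ∀ x y : ℤ, (M:ℤ) ∣ x - y → t x = t y) : PorcRep t := by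
  have hM' : (0:ℤ) < (M:ℤ) := by exact_mod_cast hM
  -- t x = ∑ n in range M, t n * indicator(M ∣ x - n)
  have hdecomp : ∀ x : ℤ, t x =
      ∑ n ∈ Finset.range M, t n * (if (M:ℤ) ∣ (x - n) then (1:ℚ) else 0) := by
    intro x
    have h0 := Int.emod_nonneg x (ne_of_gt hM')
    have h1 := Int.emod_lt_of_pos x hM'
    set n₀ : ℕ := (x % M).toNat with hn₀
    have hn₀M : n₀ ∈ Finset.range M := by simp only [Finset.mem_range]; omega
    rw [Finset.sum_eq_single_of_mem n₀ hn₀M ?_]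
    · have hdvd : (M:ℤ) ∣ x - n₀ := by
        rw [hn₀, Int.toNat_of_nonneg h0]
        have := Int.mul_ediv_add_emod x M
        exact ⟨x / M, by linarith⟩
      rw [if_pos hdvd, mul_one]
      exact hp x n₀ hdvd
    · intro n hn hne
      rw [if_neg, mul_zero]
      intro hdvd
      have hdvd₀ : (M:ℤ) ∣ x - n₀ := by
        rw [hn₀, Int.toNat_of_nonneg h0]
        have := Int.mul_ediv_add_emod x M
        exact ⟨x / M, by linarith⟩
      have hdd : (M:ℤ) ∣ (n : ℤ) - n₀ := by
        have := dvd_sub hdvd₀ hdvd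
        simpa using this
      simp only [Finset.mem_range] at hn hn₀M
      have hb1 : (n:ℤ) < M := by exact_mod_cast hn
      have hb2 : (n₀:ℤ) < M := by exact_mod_cast hn₀M
      have hc1 : (0:ℤ) ≤ (n:ℤ) := Int.natCast_nonneg n
      have hc2 : (0:ℤ) ≤ (n₀:ℤ) := Int.natCast_nonneg n₀
      obtain ⟨k, hk⟩ := hdd
      have hk0 : k = 0 := by
        rcases lt_trichotomy k 0 with h | h | h
        · exfalso; nlinarith
        · exact h
        · exfalso; nlinarith
      rw [hk0, mul_zero, sub_eq_zero] at hk
      exact hne (by exact_mod_cast hk)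
  refine (PorcRep.sum (Finset.range M)
    (fun n => fun x => t n * (if (M:ℤ) ∣ (x - n) then (1:ℚ) else 0)) ?_).congr
    (fun x => (hdecomp x).symm)
  intro n _
  have hinner : PorcRep (fun x =>
      ∑ d ∈ M.divisors, ((moebius (M/d) : ℤ) : ℚ) * (Int.gcd (x - n) (d:ℤ) : ℚ)) := by
    refine PorcRep.sum _ _ (fun d hd => ?_)
    exact PorcRep.smul _ (porcRep_gcd d (Nat.pos_of_mem_divisors hd) n)
  refine ((hinner.smul ((Nat.totient M : ℚ)⁻¹)).smul (t n)).congr (fun x => ?_)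
  rw [← indicator_eq M hM (x - n)]




open Polynomial

noncomputable section

/-- clearing denominators of a rational polynomial -/
lemma exists_clear_denom (p : ℚ[X]) :
    ∃ (b : ℤ) (P : ℤ[X]), b ≠ 0 ∧ P.map (algebraMap ℤ ℚ) = C (b:ℚ) * p := by
  obtain ⟨b, hb⟩ := IsLocalization.integerNormalization_map_to_map (nonZeroDivisors ℤ) p
  refine ⟨(b : ℤ), IsLocalization.integerNormalization (nonZeroDivisors ℤ) p,
    nonZeroDivisors.coe_ne_zero b, ?_⟩
  rw [hb, zsmul_eq_mul]
  congr 1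

lemma exists_clear_denom_family {s : ℕ} (p : Fin s → ℚ[X]) :
    ∃ (b : ℤ), b ≠ 0 ∧ ∀ i, ∃ P : ℤ[X], P.map (algebraMap ℤ ℚ) = C (b:ℚ) * p i := by
  choose b P hb hP using fun i => exists_clear_denom (p i)
  refine ⟨∏ j, b j, Finset.prod_ne_zero_iff.mpr (fun j _ => hb j), fun i => ?_⟩
  refine ⟨(∏ j ∈ Finset.univ.erase i, b j) • P i, ?_⟩
  rw [zsmul_eq_mul, Polynomial.map_mul, hP i, Polynomial.map_intCast]
  have h2 : ((∏ j ∈ Finset.univ.erase i, b j : ℤ) : ℚ[X])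
      = C ((∏ j ∈ Finset.univ.erase i, b j : ℤ) : ℚ) := by
    rw [← Polynomial.C_eq_intCast]
  rw [h2, ← mul_assoc, ← C_mul]
  congr 2
  all_goals
    rw [← Finset.mul_prod_erase _ _ (Finset.mem_univ i)]
    push_cast
    ring

end

theorem gcd_of_poly_values_is_PORC (s : ℕ) (f : Fin s → Polynomial ℤ)
    (hne : ∃ i, f i ≠ 0) :
    ∃ (F : Polynomial ℤ) (r : ℕ) (α : ℚ) (a : Fin r → ℚ) (m : Fin r → ℤ) (n : Fin r → ℤ),
      (∀ i, 1 < m i) ∧ (∀ i, 0 < n i ∧ n i < m i) ∧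
      ∀ x : ℤ,
        ((Finset.univ.gcd fun i => (f i).eval x : ℤ) : ℚ) =
          (α + ∑ i, a i * (Int.gcd (x - n i) (m i) : ℚ)) * ((|F.eval x| : ℤ) : ℚ) := by
  classical
  obtain ⟨i₀, hi₀⟩ := hne
  have hinj : Function.Injective (algebraMap ℤ ℚ) := fun a b h => by exact_mod_cast h
  have hminj : Function.Injective (Polynomial.map (algebraMap ℤ ℚ)) :=
    Polynomial.map_injective _ hinj
  set G : ℚ[X] := Finset.univ.gcd (fun i => (f i).map (algebraMap ℤ ℚ)) with hG
  have hG0 : G ≠ 0 := by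
    intro h
    have := (Finset.gcd_eq_zero_iff.mp h) i₀ (Finset.mem_univ _)
    exact hi₀ (by rwa [Polynomial.map_eq_zero_iff hinj] at this)
  choose qpoly hq using fun i =>
    (Finset.gcd_dvd (Finset.mem_univ i) : G ∣ (f i).map (algebraMap ℤ ℚ))
  have hgcdq : Finset.univ.gcd qpoly = 1 := by
    have h1 : G = normalize G * Finset.univ.gcd qpoly := by
      conv_lhs => rw [hG]
      rw [show (fun i => (f i).map (algebraMap ℤ ℚ)) = fun i => G * qpoly i from funext hq]
      exact Finset.gcd_mul_left
    obtain ⟨u, hu⟩ := associated_normalize G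
    have hunit : IsUnit (Finset.univ.gcd qpoly) := by
      have h2 : G * 1 = G * ((u : ℚ[X]) * Finset.univ.gcd qpoly) := by
        rw [mul_one, ← mul_assoc, hu, ← h1]
      have h3 := mul_left_cancel₀ hG0 h2
      exact IsUnit.of_mul_eq_one _ (by rw [mul_comm, ← h3])
    rw [← Finset.normalize_gcd, normalize_eq_one]
    exact hunit
  have hspan : (1 : ℚ[X]) ∈ Ideal.span (Set.range qpoly) := by
    set I := Ideal.span (Set.range qpoly) with hI
    have hgdvd : ∀ i, Submodule.IsPrincipal.generator I ∣ qpoly i := fun i => by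
      have hmem : qpoly i ∈ I := Ideal.subset_span (Set.mem_range_self i)
      rwa [← Ideal.span_singleton_generator I, Ideal.mem_span_singleton] at hmem
    have hd1 : Submodule.IsPrincipal.generator I ∣ 1 :=
      hgcdq ▸ Finset.dvd_gcd (fun i _ => hgdvd i)
    have htop : I = ⊤ :=
      Ideal.eq_top_of_isUnit_mem I (Submodule.IsPrincipal.generator_mem I)
        (isUnit_of_dvd_one hd1)
    rw [htop]
    trivial
  obtain ⟨u, hu⟩ := (Submodule.mem_span_range_iff_exists_fun ℚ[X]).mp hspan
  obtain ⟨e, F, he0, hF⟩ := exists_clear_denom G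
  obtain ⟨c, hc0, hQ'⟩ := exists_clear_denom_family qpoly
  choose Q hQ using hQ'
  obtain ⟨b, hb0, hv'⟩ := exists_clear_denom_family u
  choose v hv using hv'
  set K : ℤ := e * c with hK
  have hK0 : K ≠ 0 := mul_ne_zero he0 hc0
  have key1 : ∀ i, (C K : ℤ[X]) * f i = F * Q i := by
    intro i
    apply hminj
    rw [Polynomial.map_mul, Polynomial.map_mul, hF, hQ i, Polynomial.map_C, hq i]
    have hcast : (algebraMap ℤ ℚ) K = (e:ℚ) * (c:ℚ) := by
      simp only [algebraMap_int_eq, eq_intCast, hK]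
      push_cast
      ring
    rw [hcast, C_mul]
    ring
  set N : ℤ := b * c with hN
  have hN0 : N ≠ 0 := mul_ne_zero hb0 hc0
  have key2 : ∑ i, v i * Q i = (C N : ℤ[X]) := by
    apply hminj
    rw [Polynomial.map_sum, Polynomial.map_C]
    have : ∀ i, Polynomial.map (algebraMap ℤ ℚ) (v i * Q i)
        = C ((b:ℚ) * (c:ℚ)) * (u i * qpoly i) := by
      intro i
      rw [Polynomial.map_mul, hv i, hQ i, C_mul]
      ring
    rw [Finset.sum_congr rfl (fun i _ => this i), ← Finset.mul_sum]
    have hu' : ∑ i, u i * qpoly i = 1 := by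
      rw [← hu]
      simp [smul_eq_mul]
    rw [hu', mul_one]
    congr 1
    simp only [algebraMap_int_eq, eq_intCast, hN]
    push_cast
    ring
  set t : ℤ → ℤ := fun x => Finset.univ.gcd (fun i => (Q i).eval x) with ht
  have htnn : ∀ x, 0 ≤ t x := fun x => by
    rw [show t x = Finset.univ.gcd (fun i => (Q i).eval x) from rfl,
      ← Finset.normalize_gcd, ← Int.abs_eq_normalize]
    exact abs_nonneg _
  have htN : ∀ x, t x ∣ N := by
    intro x
    have hN' : (C N : ℤ[X]).eval x = N := by simp
    rw [← hN', ← key2, eval_finset_sum]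
    refine Finset.dvd_sum (fun i _ => ?_)
    rw [eval_mul]
    exact Dvd.dvd.mul_left (Finset.gcd_dvd (Finset.mem_univ i)) _
  have hper : ∀ x y : ℤ, (N:ℤ) ∣ x - y → t x = t y := by
    have key : ∀ x y : ℤ, (N:ℤ) ∣ x - y → t x ∣ t y := by
      intro x y hxy
      refine Finset.dvd_gcd (fun i _ => ?_)
      have h1 : t x ∣ (Q i).eval x := Finset.gcd_dvd (Finset.mem_univ i)
      have h2 : x - y ∣ (Q i).eval x - (Q i).eval y := sub_dvd_eval_sub x y (Q i)
      have h3 : t x ∣ (Q i).eval x - (Q i).eval y := ((htN x).trans hxy).trans h2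
      have h4 := dvd_sub h1 h3
      simpa using h4
    intro x y hxy
    exact Int.dvd_antisymm (htnn x) (htnn y) (key x y hxy)
      (key y x (by simpa using hxy.neg_right))
  have hmain : ∀ x, |K| * Finset.univ.gcd (fun i => (f i).eval x) = |F.eval x| * t x := by
    intro x
    have h1 : Finset.univ.gcd (fun i => K * (f i).eval x)
        = normalize K * Finset.univ.gcd (fun i => (f i).eval x) := Finset.gcd_mul_left
    have h2 : (fun i => K * (f i).eval x) = fun i => (F.eval x) * ((Q i).eval x) := by
      funext i
      have h3 := congrArg (Polynomial.eval x) (key1 i)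
      simpa using h3
    rw [h2, Finset.gcd_mul_left] at h1
    rw [← Int.abs_eq_normalize, ← Int.abs_eq_normalize] at h1
    rw [← h1]
  have hKQ : ((|K| : ℤ) : ℚ) ≠ 0 := by
    simp [abs_eq_zero, hK0]
  have hrep : PorcRep (fun x => (t x : ℚ) / ((|K| : ℤ) : ℚ)) := by
    refine porcRep_of_periodic N.natAbs (Int.natAbs_pos.mpr hN0) _ (fun x y hxy => ?_)
    have hdvd : (N:ℤ) ∣ x - y := by rwa [Int.natAbs_dvd] at hxy
    rw [hper x y hdvd]
  obtain ⟨r, α, a, m, n, hm, hn, hx⟩ := hrep.fin_form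
  refine ⟨F, r, α, a, m, n, hm, hn, fun x => ?_⟩
  have hcast : ((|K| : ℤ) : ℚ) * ((Finset.univ.gcd fun i => (f i).eval x : ℤ) : ℚ)
      = ((|F.eval x| : ℤ) : ℚ) * ((t x : ℤ) : ℚ) := by
    exact_mod_cast congrArg (fun z : ℤ => (z : ℚ)) (hmain x)
  rw [← hx x]
  field_simp at hcast ⊢
  linarith
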